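/- Let F be a field and a_1, ..., a_n, b_1, ..., b_n \in F with a_i \ne b_j for all i, j. Then \sum_{\sigma \in S_n} sgn(\sigma) \prod_{i=1}^n \frac{1}{a_i - b_{\sigma(i)}} = \frac{\prod_{1 \le i < j \le n} (a_j - a_i)(b_i - b_j)}{\prod_{i,j=1}^n (a_i - b_j)}. -/

import Mathlib

open Finset Matrix

lemma prod_pairs_succ {F : Type*} [CommMonoid F] {n : ℕ} (f : Fin (n+1) → Fin (n+1) → F) :
    ∏ p ∈ Finset.univ.filter (fun p : Fin (n+1) × Fin (n+1) => p.1 < p.2), f p.1 p.2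
    = (∏ j : Fin n, f 0 j.succ) *
      ∏ p ∈ Finset.univ.filter (fun p : Fin n × Fin n => p.1 < p.2), f p.1.succ p.2.succ := by
  rw [Finset.prod_filter, Finset.prod_filter, ← Finset.univ_product_univ,
    ← Finset.univ_product_univ,
    Finset.prod_product' (f := fun i j : Fin (n+1) => if i < j then f i j else 1),
    Finset.prod_product' (f := fun i j : Fin n => if i < j then f i.succ j.succ else 1)]
  rw [Fin.prod_univ_succ]
  congr 1
  · rw [Fin.prod_univ_succ]; simp
  · refine Finset.prod_congr rfl fun i _ => ?_
    rw [Fin.prod_univ_succ]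
    simp [Fin.succ_lt_succ_iff]

lemma cauchy_det_aux {F : Type*} [Field F] :
    ∀ (n : ℕ) (a b : Fin n → F), (∀ i j, a i ≠ b j) →
    (Matrix.of fun i j => (a i - b j)⁻¹).det
    = (∏ p ∈ Finset.univ.filter (fun p : Fin n × Fin n => p.1 < p.2),
        (a p.2 - a p.1) * (b p.1 - b p.2))
      / ∏ i, ∏ j, (a i - b j) := by
  intro n
  induction n with
  | zero => intro a b hab; simp
  | succ n ih =>
    intro a b hab
    have hne : ∀ i j, a i - b j ≠ 0 := fun i j => sub_ne_zero.mpr (hab i j)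
    -- M₁ : after column op (subtract column 0 from each other column)
    set M₁ : Matrix (Fin (n+1)) (Fin (n+1)) F := Matrix.of fun i j =>
      if j = 0 then (a i - b 0)⁻¹
      else (b j - b 0) * ((a i - b 0)⁻¹ * (a i - b j)⁻¹) with hM₁
    set M₂ : Matrix (Fin (n+1)) (Fin (n+1)) F := Matrix.of fun i j =>
      if j = 0 then (1:F) else (a i - b j)⁻¹ with hM₂
    set M₃ : Matrix (Fin (n+1)) (Fin (n+1)) F := Matrix.of fun i j =>
      if i = 0 then (if j = 0 then (1:F) else (a 0 - b j)⁻¹)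
      else (if j = 0 then 0 else (a 0 - a i) * ((a i - b j)⁻¹ * (a 0 - b j)⁻¹)) with hM₃
    set M₄ : Matrix (Fin n) (Fin n) F := Matrix.of fun i j =>
      (a i.succ - b j.succ)⁻¹ with hM₄
    have step1 : (Matrix.of fun i j : Fin (n+1) => (a i - b j)⁻¹).det = M₁.det := by
      rw [← Matrix.det_transpose, ← Matrix.det_transpose M₁]
      apply Matrix.det_eq_of_forall_row_eq_smul_add_const
        (fun j => if j = 0 then 0 else 1) 0 (by simp)
      intro j i
      simp only [Matrix.transpose_apply, Matrix.of_apply, hM₁]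
      by_cases hj : j = 0
      · simp [hj]
      · simp only [if_neg hj, if_pos rfl, one_mul, ↓reduceIte]
        have h1 := hne i j; have h2 := hne i 0
        field_simp
        ring
    have step2 : M₁.det = (∏ i, (a i - b 0)⁻¹) *
        ((∏ j : Fin (n+1), (if j = 0 then (1:F) else b j - b 0)) * M₂.det) := by
      have e : M₁ = Matrix.of fun i j => (a i - b 0)⁻¹ *
          ((Matrix.of fun i j : Fin (n+1) =>
            (if j = 0 then (1:F) else b j - b 0) * M₂ i j) i j) := by
        ext i j
        by_cases hj : j = 0 <;> simp [hM₁, hM₂, hj] <;> ring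
      rw [e, Matrix.det_mul_column, Matrix.det_mul_row]
    have step3 : M₂.det = M₃.det := by
      apply Matrix.det_eq_of_forall_row_eq_smul_add_const
        (fun i => if i = 0 then 0 else 1) 0 (by simp)
      intro i j
      simp only [Matrix.of_apply, hM₂, hM₃]
      by_cases hi : i = 0
      · simp [hi]
      · simp only [if_neg hi, if_pos rfl, one_mul]
        by_cases hj : j = 0
        · simp [hj]
        · simp only [if_neg hj, ↓reduceIte]
          have h1 := hne i j; have h2 := hne 0 j
          field_simp
          ring
    have step4 : M₃.det = (M₃.submatrix Fin.succ Fin.succ).det := by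
      rw [Matrix.det_succ_column_zero, Fin.sum_univ_succ]
      simp [hM₃, Fin.succ_ne_zero]
    have step5 : (M₃.submatrix Fin.succ Fin.succ).det =
        (∏ i : Fin n, (a 0 - a i.succ)) *
        ((∏ j : Fin n, (a 0 - b j.succ)⁻¹) * M₄.det) := by
      have e : M₃.submatrix Fin.succ Fin.succ = Matrix.of fun i j : Fin n =>
          (a 0 - a i.succ) * ((Matrix.of fun i j : Fin n =>
            (a 0 - b j.succ)⁻¹ * M₄ i j) i j) := by
        ext i j
        simp only [Matrix.submatrix_apply, Matrix.of_apply, hM₃, hM₄,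
          if_neg (Fin.succ_ne_zero i), if_neg (Fin.succ_ne_zero j)]
        ring
      rw [e, Matrix.det_mul_column, Matrix.det_mul_row]
    have step6 : M₄.det =
        (∏ p ∈ Finset.univ.filter (fun p : Fin n × Fin n => p.1 < p.2),
          (a p.2.succ - a p.1.succ) * (b p.1.succ - b p.2.succ))
        / ∏ i : Fin n, ∏ j : Fin n, (a i.succ - b j.succ) := by
      exact ih (fun i => a i.succ) (fun j => b j.succ) (fun i j => hab _ _)
    rw [step1, step2, step3, step4, step5, step6]
    -- now pure algebra
    rw [prod_pairs_succ (fun i j => (a j - a i) * (b i - b j))]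
    have hden : ∏ i : Fin (n+1), ∏ j : Fin (n+1), (a i - b j)
        = (∏ i : Fin (n+1), (a i - b 0)) * ((∏ j : Fin n, (a 0 - b j.succ)) *
          ∏ i : Fin n, ∏ j : Fin n, (a i.succ - b j.succ)) := by
      have e1 : ∀ i : Fin (n+1), ∏ j : Fin (n+1), (a i - b j)
          = (a i - b 0) * ∏ j : Fin n, (a i - b j.succ) := fun i => Fin.prod_univ_succ _
      rw [Finset.prod_congr rfl (fun i _ => e1 i), Finset.prod_mul_distrib,
        Fin.prod_univ_succ (fun i => ∏ j : Fin n, (a i - b j.succ))]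
    have hv : (∏ j : Fin (n+1), (if j = 0 then (1:F) else b j - b 0))
        = ∏ j : Fin n, (b j.succ - b 0) := by
      rw [Fin.prod_univ_succ]
      simp [Fin.succ_ne_zero]
    rw [hden, hv]
    have hsign : (∏ j : Fin n, (b j.succ - b 0)) * (∏ i : Fin n, (a 0 - a i.succ))
        = ∏ j : Fin n, (a j.succ - a 0) * (b 0 - b j.succ) := by
      rw [← Finset.prod_mul_distrib]
      exact Finset.prod_congr rfl fun j _ => by ring
    have h1 : (∏ i : Fin (n+1), (a i - b 0)) ≠ 0 :=
      Finset.prod_ne_zero_iff.mpr fun i _ => hne i 0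
    have h2 : (∏ j : Fin n, (a 0 - b j.succ)) ≠ 0 :=
      Finset.prod_ne_zero_iff.mpr fun j _ => hne 0 j.succ
    have h3 : (∏ i : Fin n, ∏ j : Fin n, (a i.succ - b j.succ)) ≠ 0 :=
      Finset.prod_ne_zero_iff.mpr fun i _ =>
        Finset.prod_ne_zero_iff.mpr fun j _ => hne i.succ j.succ
    rw [Finset.prod_inv_distrib, Finset.prod_inv_distrib, ← hsign]
    field_simp

/-- Cauchy determinant formula: for `a_i ≠ b_j`,
`∑_{σ ∈ S_n} sgn(σ) ∏_i 1/(a_i - b_{σ i})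
  = ∏_{i<j} (a_j - a_i)(b_i - b_j) / ∏_{i,j} (a_i - b_j)`. -/
theorem cauchy_determinant {F : Type*} [Field F] (n : ℕ) (a b : Fin n → F)
    (hab : ∀ i j, a i ≠ b j) :
    ∑ σ : Equiv.Perm (Fin n),
      ((Equiv.Perm.sign σ : ℤ) : F) * ∏ i, (a i - b (σ i))⁻¹
    = (∏ p ∈ Finset.univ.filter (fun p : Fin n × Fin n => p.1 < p.2),
        (a p.2 - a p.1) * (b p.1 - b p.2))
      / ∏ i, ∏ j, (a i - b j) := by
  rw [← cauchy_det_aux n a b hab, ← Matrix.det_transpose, Matrix.det_apply']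
  refine Finset.sum_congr rfl fun σ _ => ?_
  simp [Matrix.transpose_apply]
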